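/- Let 0 ≤ α ≤ 1 and let F be α-SR with differentiable density f. Then for all v₀ ≤ v with F(v) < 1, the density satisfies f(v) ≥ f(v₀) · ((1−F(v))/(1−F(v₀)))^{2−α}. -/

import Mathlib

open MeasureTheory Real Filter

/-- The virtual valuation function `φ(v) = v − (1 − F(v))/f(v)`. -/
noncomputable def virtualValue (F f : ℝ → ℝ) (v : ℝ) : ℝ := v - (1 - F v) / f v

/-- The hazard rate `h(v) = f(v)/(1 − F(v))`. -/
noncomputable def hazardRate (F f : ℝ → ℝ) (v : ℝ) : ℝ := f v / (1 - F v)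

/-- `F` is the CDF of a continuous distribution supported on `[0, ∞)`,
with density `f = F'` that is positive wherever `F < 1`. -/
structure IsCDF (F f : ℝ → ℝ) : Prop where
  zero : F 0 = 0
  mono : Monotone F
  le_one : ∀ v, F v ≤ 1
  tendsto_one : Tendsto F atTop (nhds 1)
  hasDeriv : ∀ v, 0 ≤ v → HasDerivAt F (f v) v
  f_pos : ∀ v, 0 ≤ v → F v < 1 → 0 < f v

/-- `F` is `α`-strongly regular: `φ(y) − φ(x) ≥ α (y − x)` for all `x < y` in the support. -/
def IsAlphaSR (α : ℝ) (F f : ℝ → ℝ) : Prop :=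
  ∀ x y, 0 ≤ x → x < y → F y < 1 →
    virtualValue F f y - virtualValue F f x ≥ α * (y - x)

theorem density_lower_bound (α : ℝ) (F f : ℝ → ℝ)
    (hα0 : 0 ≤ α) (hα1 : α ≤ 1)
    (hcdf : IsCDF F f)
    (hfd : ∀ v, 0 ≤ v → DifferentiableAt ℝ f v)
    (hSR : IsAlphaSR α F f)
    (v₀ v : ℝ) (hv₀ : 0 ≤ v₀) (h0v : v₀ ≤ v) (hv : F v < 1) :
    f v ≥ f v₀ * (((1 - F v) / (1 - F v₀)) ^ (2 - α : ℝ)) := by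
  -- key derivative inequality
  have key : ∀ x, 0 ≤ x → F x < 1 → (α - 2) * f x ^ 2 ≤ deriv f x * (1 - F x) := by
    intro x hx hFx
    have fpos : 0 < f x := hcdf.f_pos x hx hFx
    have fne : f x ≠ 0 := ne_of_gt fpos
    have hu : HasDerivAt (fun y => 1 - F y) (-f x) x := (hcdf.hasDeriv x hx).const_sub 1
    have hdiv : HasDerivAt (fun y => (1 - F y) / f y)
        ((-f x * f x - (1 - F x) * deriv f x) / f x ^ 2) x :=
      hu.div (hfd x hx).hasDerivAt fne
    have hφ : HasDerivAt (virtualValue F f)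
        (1 - (-f x * f x - (1 - F x) * deriv f x) / f x ^ 2) x := by
      exact (hasDerivAt_id x).sub hdiv
    set D := 1 - (-f x * f x - (1 - F x) * deriv f x) / f x ^ 2 with hD
    have hαD : α ≤ D := by
      have hslope : Tendsto (slope (virtualValue F f) x) (nhdsWithin x (Set.Ioi x)) (nhds D) := by
        have := (hφ.hasDerivWithinAt (s := Set.Ioi x))
        rw [hasDerivWithinAt_iff_tendsto_slope] at this
        rwa [Set.diff_singleton_eq_self (by simp)] at this
      have hev : ∀ᶠ y in nhdsWithin x (Set.Ioi x), α ≤ slope (virtualValue F f) x y := by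
        have hcont : ContinuousAt F x := (hcdf.hasDeriv x hx).continuousAt
        have hev1 : ∀ᶠ y in nhds x, F y < 1 := hcont.eventually_lt continuousAt_const hFx
        filter_upwards [nhdsWithin_le_nhds hev1, self_mem_nhdsWithin] with y hy1 hy2
        have hxy : x < y := hy2
        have := hSR x y hx hxy hy1
        rw [slope_def_field]
        rw [ge_iff_le, ← sub_nonneg] at this
        have hpos : 0 < y - x := by linarith
        rw [le_div_iff₀ hpos]
        nlinarith [this]
      exact ge_of_tendsto hslope hev
    have h2 : α * f x ^ 2 ≤ D * f x ^ 2 :=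
      mul_le_mul_of_nonneg_right hαD (sq_nonneg _)
    rw [hD, sub_mul, div_mul_cancel₀ _ (pow_ne_zero 2 fne)] at h2
    nlinarith [h2]
  -- monotone auxiliary function
  set G : ℝ → ℝ := fun x => f x * (1 - F x) ^ (α - 2 : ℝ) with hG
  have hderivG : ∀ x ∈ Set.Icc v₀ v, HasDerivAt G
      (deriv f x * (1 - F x) ^ (α - 2 : ℝ) +
        f x * (-f x * (α - 2) * (1 - F x) ^ ((α - 2 : ℝ) - 1))) x := by
    intro x hx
    have hx0 : 0 ≤ x := le_trans hv₀ hx.1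
    have hFx : F x < 1 := lt_of_le_of_lt (hcdf.mono hx.2) hv
    have hBne : 1 - F x ≠ 0 := by linarith
    have hu : HasDerivAt (fun y => 1 - F y) (-f x) x := (hcdf.hasDeriv x hx0).const_sub 1
    exact (hfd x hx0).hasDerivAt.mul (hu.rpow_const (Or.inl hBne))
  have hmono : MonotoneOn G (Set.Icc v₀ v) := by
    apply monotoneOn_of_deriv_nonneg (convex_Icc v₀ v)
    · exact fun x hx => ((hderivG x hx).continuousAt).continuousWithinAt
    · intro x hx
      rw [interior_Icc] at hx
      exact ((hderivG x (Set.mem_Icc_of_Ioo hx)).differentiableAt).differentiableWithinAt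
    · intro x hx
      rw [interior_Icc] at hx
      have hx' := Set.mem_Icc_of_Ioo hx
      rw [(hderivG x hx').deriv]
      have hx0 : 0 ≤ x := le_trans hv₀ hx'.1
      have hFx : F x < 1 := lt_of_le_of_lt (hcdf.mono hx'.2) hv
      have hB : 0 < 1 - F x := by linarith
      have hk := key x hx0 hFx
      have hsplit : (1 - F x) ^ (α - 2 : ℝ) = (1 - F x) ^ ((α - 2 : ℝ) - 1) * (1 - F x) := by
        rw [← Real.rpow_add_one (ne_of_gt hB)]; ring_nf
      have htpos : (0:ℝ) < (1 - F x) ^ ((α - 2 : ℝ) - 1) := Real.rpow_pos_of_pos hB _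
      rw [hsplit]
      nlinarith [mul_nonneg htpos.le (sub_nonneg.2 hk)]
  have hGle : G v₀ ≤ G v :=
    hmono (Set.left_mem_Icc.2 h0v) (Set.right_mem_Icc.2 h0v) h0v
  have hFv₀ : F v₀ < 1 := lt_of_le_of_lt (hcdf.mono h0v) hv
  have hA : 0 < 1 - F v₀ := by linarith
  have hB : 0 < 1 - F v := by linarith
  set c : ℝ := 2 - α with hc
  have hAc : 0 < (1 - F v₀) ^ c := Real.rpow_pos_of_pos hA _
  have hBc : 0 < (1 - F v) ^ c := Real.rpow_pos_of_pos hB _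
  have hdivr : ((1 - F v) / (1 - F v₀)) ^ c = (1 - F v) ^ c / (1 - F v₀) ^ c :=
    Real.div_rpow hB.le hA.le c
  have hAinv : (1 - F v₀) ^ (α - 2 : ℝ) = ((1 - F v₀) ^ c)⁻¹ := by
    rw [hc, show (α - 2 : ℝ) = -(2 - α) by ring, Real.rpow_neg hA.le]
  have hBinv : (1 - F v) ^ (α - 2 : ℝ) = ((1 - F v) ^ c)⁻¹ := by
    rw [hc, show (α - 2 : ℝ) = -(2 - α) by ring, Real.rpow_neg hB.le]
  rw [hG] at hGle
  simp only [hAinv, hBinv] at hGle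
  rw [ge_iff_le, hdivr]
  calc f v₀ * ((1 - F v) ^ c / (1 - F v₀) ^ c)
      = (f v₀ * ((1 - F v₀) ^ c)⁻¹) * (1 - F v) ^ c := by rw [div_eq_mul_inv]; ring
    _ ≤ (f v * ((1 - F v) ^ c)⁻¹) * (1 - F v) ^ c :=
        mul_le_mul_of_nonneg_right hGle hBc.le
    _ = f v := by rw [mul_assoc, inv_mul_cancel₀ (ne_of_gt hBc), mul_one]
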